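/- Let k ≥ 3 be an integer, let G = (A ∪ B, E) be a bipartite graph in which every vertex has degree at most k+1, and let I_G and X_G be the associated personalized bi-valued instance and allocation. If an allocation X' Pareto-dominates X_G, then for every agent b ∈ B, either b receives no good that it values at 1 + (1+ε)/k and u_b(X'_b) = u_b((X_G)_b), or the following all hold: b receives exactly k goods each valued 1 + (1+ε)/k by b and receives no other goods, b gives away all k+1 of its filler goods, and u_b(X'_b) − u_b((X_G)_b) = ε. -/

import Mathlib

open Finset
open scoped Classical

noncomputable section

/-- Additive utility of a bundle: the sum of the values of the single goods in it. -/
def util {α β : Type*} [DecidableEq β] (u : α → β → ℝ) (i : α) (S : Finset β) : ℝ :=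
  ∑ g ∈ S, u i g

/-- `X` is an allocation: a partition of the set of goods into (possibly empty) bundles,
one per agent. -/
def IsAllocation {α β : Type*} [DecidableEq β] (X : α → Finset β) : Prop :=
  (∀ g : β, ∃ i, g ∈ X i) ∧ ∀ i j : α, i ≠ j → Disjoint (X i) (X j)

/-- `X'` Pareto-dominates `X` w.r.t. utilities `u`. -/
def ParetoDominates {α β : Type*} [DecidableEq β] (u : α → β → ℝ)
    (X' X : α → Finset β) : Prop :=
  (∀ i, util u i (X i) ≤ util u i (X' i)) ∧ ∃ j, util u j (X j) < util u j (X' j)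

variable {A B : Type*} [Fintype A] [Fintype B] [DecidableEq A] [DecidableEq B]

/-- The goods of the instance `I_G`: one good `g_e` for each edge `e ∈ E` of the bipartite
graph, plus `k+1` filler goods for each vertex `b ∈ B`. -/
abbrev RedGood (E : Finset (A × B)) (k : ℕ) : Type _ :=
  {e : A × B // e ∈ E} ⊕ (B × Fin (k + 1))

/-- The utilities of the instance `I_G`: agent `a ∈ A` values `g_e` at `1 + 1/k` if `a` is
an endpoint of `e` and at `1` otherwise, and values every filler good at `1`; agent `b ∈ B`
values `g_e` at `1 + (1+ε)/k` if `b` is an endpoint of `e` and at `1` otherwise, and values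
every filler good at `1`. -/
def redUtil (E : Finset (A × B)) (k : ℕ) (ε : ℝ) : (A ⊕ B) → RedGood E k → ℝ
  | Sum.inl a, Sum.inl e => if e.val.1 = a then 1 + 1 / (k : ℝ) else 1
  | Sum.inl _, Sum.inr _ => 1
  | Sum.inr b, Sum.inl e => if e.val.2 = b then 1 + (1 + ε) / (k : ℝ) else 1
  | Sum.inr _, Sum.inr _ => 1

/-- The allocation `X_G`: each agent `a ∈ A` gets the goods `g_e` for the edges `e`
incident to `a`, and each agent `b ∈ B` gets its own `k+1` filler goods. -/
def XG (E : Finset (A × B)) (k : ℕ) : (A ⊕ B) → Finset (RedGood E k)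
  | Sum.inl a =>
      Finset.univ.filter (fun g => ∃ e : {e : A × B // e ∈ E}, g = Sum.inl e ∧ e.val.1 = a)
  | Sum.inr b =>
      Finset.univ.filter (fun g => ∃ p : B × Fin (k + 1), g = Sum.inr p ∧ p.1 = b)

/-- `G = (A ∪ B, E)` contains a `k`-regular bipartite subgraph: a nonempty edge set
`E₁ ⊆ E` such that every vertex incident to an edge of `E₁` is incident to exactly `k`
edges of `E₁`. -/
def HasKRegularSubgraph (E : Finset (A × B)) (k : ℕ) : Prop :=
  ∃ E₁ : Finset (A × B), E₁ ⊆ E ∧ E₁.Nonempty ∧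
    (∀ a : A, (E₁.filter (fun e => e.1 = a)).Nonempty →
      (E₁.filter (fun e => e.1 = a)).card = k) ∧
    (∀ b : B, (E₁.filter (fun e => e.2 = b)).Nonempty →
      (E₁.filter (fun e => e.2 = b)).card = k)

lemma sum_partition {α β : Type*} [Fintype α] [Fintype β] [DecidableEq β]
    (X : α → Finset β) (hX : IsAllocation X) (f : β → ℝ) :
    ∑ i, ∑ g ∈ X i, f g = ∑ g, f g := by
  classical
  have hmem : ∀ i, X i = Finset.univ.filter (fun g => (hX.1 g).choose = i) := by
    intro i
    ext g
    simp only [Finset.mem_filter, Finset.mem_univ, true_and]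
    constructor
    · intro hg
      by_contra hne
      exact absurd hg (Finset.disjoint_left.mp (hX.2 _ _ hne) (hX.1 g).choose_spec)
    · intro h; rw [← h]; exact (hX.1 g).choose_spec
  calc ∑ i, ∑ g ∈ X i, f g
      = ∑ i, ∑ g ∈ Finset.univ.filter (fun g => (hX.1 g).choose = i), f g := by
        exact Finset.sum_congr rfl fun i _ => by rw [← hmem]
    _ = ∑ g, f g := Finset.sum_fiberwise _ _ _


set_option maxHeartbeats 2000000 in
/-- If an allocation `X'` Pareto-dominates `X_G`, then every agent `b ∈ B`
either receives no good that she values at `1 + (1+ε)/k` and her utility is unchanged, or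
she ends up with exactly `k` goods, each valued `1 + (1+ε)/k` by her and nothing else, she
gives away all `k+1` of her filler goods, and her utility increases by exactly `ε`. -/
theorem paretoImprovement_structure_on_B
    (k : ℕ) (hk : 3 ≤ k) (E : Finset (A × B)) (ε : ℝ)
    (hdegA : ∀ a : A, (E.filter (fun e => e.1 = a)).card ≤ k + 1)
    (hdegB : ∀ b : B, (E.filter (fun e => e.2 = b)).card ≤ k + 1)
    (hε0 : 0 < ε)
    (hε1 : ε < 1 / (k * (E.card + (k + 1) * Fintype.card B)))
    (X' : (A ⊕ B) → Finset (RedGood E k)) (hX' : IsAllocation X')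
    (hdom : ParetoDominates (redUtil E k ε) X' (XG E k)) :
    ∀ b : B,
      ((∀ g ∈ X' (Sum.inr b) \ XG E k (Sum.inr b),
          redUtil E k ε (Sum.inr b) g ≠ 1 + (1 + ε) / (k : ℝ)) ∧
        util (redUtil E k ε) (Sum.inr b) (X' (Sum.inr b)) =
          util (redUtil E k ε) (Sum.inr b) (XG E k (Sum.inr b))) ∨
      ((X' (Sum.inr b)).card = k ∧
        (∀ g ∈ X' (Sum.inr b), redUtil E k ε (Sum.inr b) g = 1 + (1 + ε) / (k : ℝ)) ∧
        Disjoint (X' (Sum.inr b)) (XG E k (Sum.inr b)) ∧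
        util (redUtil E k ε) (Sum.inr b) (X' (Sum.inr b)) -
          util (redUtil E k ε) (Sum.inr b) (XG E k (Sum.inr b)) = ε) := by
  intro b
  set u := redUtil E k ε with hu
  have hK0 : (0:ℝ) < (k:ℝ) := by positivity
  have hK3 : (3:ℝ) ≤ (k:ℝ) := by exact_mod_cast hk
  have hKne : ((k:ℝ)) ≠ 0 := ne_of_gt hK0
  -- value dichotomy for agents in B
  have hval : ∀ (b' : B) (g : RedGood E k),
      u (Sum.inr b') g = 1 + (1+ε)/(k:ℝ) ∨ u (Sum.inr b') g = 1 := by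
    intro b' g
    cases g with
    | inl e =>
      simp only [hu, redUtil]
      split_ifs with h
      · exact Or.inl rfl
      · exact Or.inr rfl
    | inr p => exact Or.inr rfl
  have hhigh_ne : (1 : ℝ) + (1+ε)/(k:ℝ) ≠ 1 := by
    have : 0 < (1+ε)/(k:ℝ) := by positivity
    linarith
  -- XG is an allocation
  have hXGalloc : IsAllocation (XG E k) := by
    constructor
    · intro g
      cases g with
      | inl e => exact ⟨Sum.inl e.val.1, by
          simp only [XG, Finset.mem_filter, Finset.mem_univ, true_and]; exact ⟨e, rfl, rfl⟩⟩
      | inr p => exact ⟨Sum.inr p.1, by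
          simp only [XG, Finset.mem_filter, Finset.mem_univ, true_and]; exact ⟨p, rfl, rfl⟩⟩
    · intro i j hij
      rw [Finset.disjoint_left]
      intro g hgi hgj
      apply hij
      cases i <;> cases j <;>
        simp only [XG, Finset.mem_filter, Finset.mem_univ, true_and] at hgi hgj <;>
        obtain ⟨x, rfl, hx⟩ := hgi <;> obtain ⟨y, hy, hy2⟩ := hgj <;>
        first
          | (cases hy; subst hx hy2; rfl)
          | simp at hy
  -- top and XG-value functions
  set T : RedGood E k → ℝ := fun g => Sum.elim (fun _ => 1 + (1+ε)/(k:ℝ)) (fun _ => 1) g with hT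
  set W : RedGood E k → ℝ := fun g => Sum.elim (fun _ => 1 + 1/(k:ℝ)) (fun _ => 1) g with hW
  have hTtop : ∀ (i : A ⊕ B) (g : RedGood E k), u i g ≤ T g := by
    have hεk : (0:ℝ) ≤ ε / (k:ℝ) := by positivity
    have h1k : (0:ℝ) ≤ (1+ε) / (k:ℝ) := by positivity
    have hmono : 1/(k:ℝ) ≤ (1+ε)/(k:ℝ) := by
      have : (1+ε)/(k:ℝ) - 1/(k:ℝ) = ε/(k:ℝ) := by ring
      linarith
    intro i g
    cases i <;> cases g <;>
      simp only [hu, redUtil, hT, Sum.elim_inl, Sum.elim_inr] <;>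
      first
        | (split_ifs <;> linarith)
        | linarith
  -- XG utility equals W pointwise
  have hXGW : ∀ i, util u i (XG E k i) = ∑ g ∈ XG E k i, W g := by
    intro i
    show ∑ g ∈ XG E k i, u i g = ∑ g ∈ XG E k i, W g
    apply Finset.sum_congr rfl
    intro g hg
    cases i with
    | inl a =>
      simp only [XG, Finset.mem_filter] at hg
      obtain ⟨-, e, rfl, he⟩ := hg
      simp only [hu, redUtil, hW, Sum.elim_inl, if_pos he]
    | inr b' =>
      simp only [XG, Finset.mem_filter] at hg
      obtain ⟨-, p, rfl, -⟩ := hg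
      simp only [hu, redUtil, hW, Sum.elim_inr]
  have hsumXG : ∑ i, util u i (XG E k i) = ∑ g, W g := by
    rw [Finset.sum_congr rfl (fun i _ => hXGW i)]
    exact sum_partition _ hXGalloc W
  have hsumX' : ∑ i, util u i (X' i) ≤ ∑ g, T g := by
    calc ∑ i, util u i (X' i) ≤ ∑ i, ∑ g ∈ X' i, T g := by
          apply Finset.sum_le_sum
          intro i _
          exact Finset.sum_le_sum fun g _ => hTtop i g
      _ = ∑ g, T g := sum_partition _ hX' T
  have hTW : ∑ g, T g - ∑ g, W g = (E.card : ℝ) * (ε/(k:ℝ)) := by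
    rw [← Finset.sum_sub_distrib, Fintype.sum_sum_type]
    have h1 : ∀ e : {e : A × B // e ∈ E}, T (Sum.inl e) - W (Sum.inl e) = ε/(k:ℝ) := by
      intro e; simp only [hT, hW, Sum.elim_inl]; ring
    have h2 : ∀ p : B × Fin (k+1), T (Sum.inr p) - W (Sum.inr p) = 0 := by
      intro p; simp [hT, hW]
    rw [Finset.sum_congr rfl (fun e _ => h1 e), Finset.sum_congr rfl (fun p _ => h2 p)]
    simp [Finset.sum_const, Fintype.card_coe, nsmul_eq_mul]
  -- individual slack bound
  have hb_le : util u (Sum.inr b) (X' (Sum.inr b)) - util u (Sum.inr b) (XG E k (Sum.inr b))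
      ≤ (E.card:ℝ) * (ε/(k:ℝ)) := by
    have hδi : ∀ i, 0 ≤ util u i (X' i) - util u i (XG E k i) := fun i => by
      linarith [hdom.1 i]
    have hsingle := Finset.single_le_sum
      (f := fun i => util u i (X' i) - util u i (XG E k i))
      (fun i _ => hδi i) (Finset.mem_univ (Sum.inr b))
    have hsplit : ∑ i, (util u i (X' i) - util u i (XG E k i))
        = ∑ i, util u i (X' i) - ∑ i, util u i (XG E k i) := Finset.sum_sub_distrib _ _
    rw [hsplit] at hsingle
    have hsingle2 : util u (Sum.inr b) (X' (Sum.inr b)) - util u (Sum.inr b) (XG E k (Sum.inr b))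
        ≤ ∑ i, util u i (X' i) - ∑ i, util u i (XG E k i) := hsingle
    linarith [hsumX', hsumXG, hTW, hsingle2]
  -- utility of XG at b
  have hXGb : util u (Sum.inr b) (XG E k (Sum.inr b)) = (k : ℝ) + 1 := by
    have himg : XG E k (Sum.inr b) =
        (Finset.univ : Finset (Fin (k+1))).image (fun j => (Sum.inr (b, j) : RedGood E k)) := by
      ext g
      simp only [XG, Finset.mem_filter, Finset.mem_univ, true_and, Finset.mem_image]
      constructor
      · rintro ⟨p, rfl, rfl⟩; exact ⟨p.2, rfl⟩
      · rintro ⟨j, rfl⟩; exact ⟨(b, j), rfl, rfl⟩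
    have hcard : (XG E k (Sum.inr b)).card = k + 1 := by
      rw [himg, Finset.card_image_of_injective _ (fun x y hxy => by simpa using hxy)]
      simp
    have hconst : util u (Sum.inr b) (XG E k (Sum.inr b)) =
        ∑ g ∈ XG E k (Sum.inr b), (1 : ℝ) := by
      apply Finset.sum_congr rfl
      intro g hg
      simp only [XG, Finset.mem_filter] at hg
      obtain ⟨-, p, rfl, -⟩ := hg
      rfl
    rw [hconst, Finset.sum_const, hcard]
    push_cast; ring
  -- split the bundle of b into high and low valued goods
  set S := X' (Sum.inr b) with hS
  set H := S.filter (fun g => u (Sum.inr b) g = 1 + (1+ε)/(k:ℝ)) with hH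
  set L := S.filter (fun g => ¬ (u (Sum.inr b) g = 1 + (1+ε)/(k:ℝ))) with hL
  set nh := H.card with hnh
  set nl := L.card with hnl
  have hcards : nh + nl = S.card :=
    Finset.card_filter_add_card_filter_not _
  have hutilS : util u (Sum.inr b) S = (nh : ℝ) * (1 + (1+ε)/(k:ℝ)) + nl := by
    have hsplit := Finset.sum_filter_add_sum_filter_not S
      (fun g => u (Sum.inr b) g = 1 + (1+ε)/(k:ℝ)) (u (Sum.inr b))
    have hHsum : ∑ g ∈ H, u (Sum.inr b) g = (nh:ℝ) * (1 + (1+ε)/(k:ℝ)) := by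
      rw [Finset.sum_congr rfl (fun g hg => (Finset.mem_filter.mp hg).2),
        Finset.sum_const, nsmul_eq_mul]
    have hLsum : ∑ g ∈ L, u (Sum.inr b) g = (nl:ℝ) := by
      have hone : ∀ g ∈ L, u (Sum.inr b) g = 1 := by
        intro g hg
        rcases hval b g with hw | hw
        · exact absurd hw (Finset.mem_filter.mp hg).2
        · exact hw
      rw [Finset.sum_congr rfl hone, Finset.sum_const, nsmul_eq_mul, mul_one]
    show ∑ g ∈ S, u (Sum.inr b) g = _
    rw [← hsplit, hHsum, hLsum]
  -- every high good is an edge good incident to b, so nh ≤ k+1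
  have hHmem : ∀ g ∈ H, ∃ e : {e : A × B // e ∈ E}, g = Sum.inl e ∧ e.val.2 = b := by
    intro g hg
    obtain ⟨hgS, hgP⟩ := Finset.mem_filter.mp hg
    cases g with
    | inr p =>
      simp only [hu, redUtil] at hgP
      exact absurd hgP.symm hhigh_ne
    | inl e =>
      refine ⟨e, rfl, ?_⟩
      by_contra hne
      simp only [hu, redUtil, if_neg hne] at hgP
      exact hhigh_ne hgP.symm
  have hHcard : nh ≤ k + 1 := by
    have hHsub : H ⊆ (Finset.univ.filter (fun e : {e : A × B // e ∈ E} => e.val.2 = b)).image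
        (fun e => (Sum.inl e : RedGood E k)) := by
      intro g hg
      obtain ⟨e, rfl, he⟩ := hHmem g hg
      simp only [Finset.mem_image, Finset.mem_filter, Finset.mem_univ, true_and]
      exact ⟨e, he, rfl⟩
    calc nh ≤ _ := Finset.card_le_card hHsub
      _ ≤ (Finset.univ.filter (fun e : {e : A × B // e ∈ E} => e.val.2 = b)).card :=
          Finset.card_image_le
      _ ≤ (E.filter (fun e => e.2 = b)).card := by
          apply Finset.card_le_card_of_injOn (fun e => e.val)
          · intro e he
            simp only [Finset.mem_coe, Finset.mem_filter, Finset.mem_univ, true_and] at he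
            exact Finset.mem_filter.mpr ⟨e.2, he⟩
          · intro x _ y _ hxy; exact Subtype.ext hxy
      _ ≤ k + 1 := hdegB b
  -- numeric bounds
  have hBpos : 1 ≤ (Fintype.card B : ℝ) := by
    have : Nonempty B := ⟨b⟩
    exact_mod_cast Fintype.card_pos
  set M : ℝ := (E.card : ℝ) + ((k:ℝ)+1) * (Fintype.card B : ℝ) with hM
  have hεM : ε < 1/((k:ℝ)*M) := by
    have : ((E.card : ℝ) + ((k:ℝ)+1) * (Fintype.card B : ℝ)) = M := rfl
    exact_mod_cast hε1
  have hEnn : (0:ℝ) ≤ (E.card:ℝ) := by positivity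
  have hMk : ((k:ℝ)+1) ≤ M := by nlinarith
  have hMpos : (0:ℝ) < M := by nlinarith
  have hEM : (E.card:ℝ) ≤ M := by nlinarith
  have hMε : M * ε < 1/(k:ℝ) := by
    have h2 : M * ε < M * (1/((k:ℝ)*M)) := mul_lt_mul_of_pos_left hεM hMpos
    have hMne : M ≠ 0 := ne_of_gt hMpos
    have h3 : M * (1/((k:ℝ)*M)) = 1/(k:ℝ) := by field_simp
    linarith
  have hbE : (E.card:ℝ) * ε < 1/(k:ℝ) := by nlinarith
  have hbk : ((k:ℝ)+1) * ε < 1/(k:ℝ) := by nlinarith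
  have hinv : 1/(k:ℝ) ≤ 1 := by rw [div_le_one hK0]; linarith
  -- the utility gain of b
  set δ : ℝ := util u (Sum.inr b) S - ((k:ℝ)+1) with hδdef
  have hδ0 : 0 ≤ δ := by
    have := hdom.1 (Sum.inr b)
    rw [hXGb] at this
    simp only [hδdef]
    linarith
  have hδup : δ ≤ (E.card:ℝ)*(ε/(k:ℝ)) := by
    rw [hXGb] at hb_le
    simp only [hδdef]
    linarith
  -- the integer invariant
  set t : ℤ := (k:ℤ)*((nh:ℤ)+(nl:ℤ)) + (nh:ℤ) - (k:ℤ)*((k:ℤ)+1) with htdef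
  have htR : (t:ℝ) = (k:ℝ)*δ - (nh:ℝ)*ε := by
    have hδval : δ = (nh : ℝ) * (1 + (1+ε)/(k:ℝ)) + nl - ((k:ℝ)+1) := by
      simp only [hδdef, hutilS]
    rw [hδval, htdef]
    push_cast
    field_simp
    ring
  have hnhR : (nh:ℝ) ≤ (k:ℝ)+1 := by exact_mod_cast hHcard
  have ht_lb : (-1:ℝ) < (t:ℝ) := by
    rw [htR]
    have h1 : (nh:ℝ)*ε ≤ ((k:ℝ)+1)*ε := by nlinarith
    nlinarith
  have ht_ub : (t:ℝ) < 1 := by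
    rw [htR]
    have h2 : (k:ℝ)*δ ≤ (E.card:ℝ)*ε := by
      have h4 : (k:ℝ)*((E.card:ℝ)*(ε/(k:ℝ))) = (E.card:ℝ)*ε := by field_simp
      nlinarith
    have h3 : (0:ℝ) ≤ (nh:ℝ)*ε := by positivity
    linarith
  have ht0 : t = 0 := by
    have h1 : (-1:ℤ) < t := by exact_mod_cast ht_lb
    have h2 : t < 1 := by exact_mod_cast ht_ub
    omega
  have hNat : k*(nh+nl) + nh = k*(k+1) := by
    have hZ : (k:ℤ)*((nh:ℤ)+(nl:ℤ)) + (nh:ℤ) = (k:ℤ)*((k:ℤ)+1) := by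
      rw [htdef] at ht0; linarith
    exact_mod_cast hZ
  -- solve: either nh = 0, nl = k+1 or nh = k, nl = 0
  have hkpos : 0 < k := by omega
  have hnsum : nh + nl ≤ k + 1 := by
    have : k*(nh+nl) ≤ k*(k+1) := le_of_add_le_left (hNat.le)
    exact Nat.le_of_mul_le_mul_left this hkpos
  set d := k + 1 - (nh + nl) with hdd
  have hd' : nh + nl + d = k + 1 := by omega
  have hkd : nh = k * d := by
    have h5 : k*(nh+nl) + nh = k*(nh+nl) + k*d := by
      rw [hNat, ← Nat.mul_add, hd']
    exact Nat.add_left_cancel h5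
  have hd1 : d ≤ 1 := by
    rcases Nat.lt_or_ge d 2 with hc | hc
    · omega
    · exfalso
      have : k*2 ≤ k*d := Nat.mul_le_mul_left k hc
      omega
  interval_cases d
  · -- d = 0 : nh = 0, nl = k+1 : left branch
    have hnh0 : nh = 0 := by omega
    have hnl0 : nl = k + 1 := by omega
    left
    constructor
    · intro g hg
      have hgS : g ∈ S := (Finset.mem_sdiff.mp hg).1
      intro hval'
      have : g ∈ H := Finset.mem_filter.mpr ⟨hgS, hval'⟩
      have hHe : H = ∅ := Finset.card_eq_zero.mp (by omega)
      rw [hHe] at this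
      exact absurd this (Finset.notMem_empty g)
    · rw [hutilS, hXGb, hnh0, hnl0]
      push_cast; ring
  · -- d = 1 : nh = k, nl = 0 : right branch
    have hnhk : nh = k := by omega
    have hnl0 : nl = 0 := by omega
    have hLe : L = ∅ := Finset.card_eq_zero.mp (by omega)
    have hallhigh : ∀ g ∈ S, u (Sum.inr b) g = 1 + (1+ε)/(k:ℝ) := by
      intro g hg
      by_contra hne
      have : g ∈ L := Finset.mem_filter.mpr ⟨hg, hne⟩
      rw [hLe] at this
      exact absurd this (Finset.notMem_empty g)
    right
    refine ⟨by omega, hallhigh, ?_, ?_⟩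
    · rw [Finset.disjoint_left]
      intro g hgS hgXG
      simp only [XG, Finset.mem_filter] at hgXG
      obtain ⟨-, p, rfl, -⟩ := hgXG
      have h1 : u (Sum.inr b) (Sum.inr p) = 1 := rfl
      have h2 := hallhigh _ hgS
      rw [h1] at h2
      exact hhigh_ne h2.symm
    · rw [hutilS, hXGb, hnhk, hnl0]
      push_cast
      field_simp
      ring


end
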